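/- Let κ_n : ℝ → ℝ (n ∈ ℕ) and κ : ℝ → ℝ be continuous functions such that κ_n → κ uniformly on every compact subset of ℝ. If for every n every Jacobi solution for κ_n that vanishes at two distinct points is identically zero, then every Jacobi solution for κ that vanishes at two distinct points is identically zero. -/

import Mathlib

open Set Filter Topology

/-- A Jacobi solution for `κ` on `ℝ`: a `C²` function with `z'' + κ z = 0`. -/
def IsJacobi (κ z : ℝ → ℝ) : Prop :=
  ContDiff ℝ 2 z ∧ ∀ t, deriv (deriv z) t + κ t * z t = 0

/-- `κ` is disconjugate: every Jacobi solution for `κ` that vanishes at two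
distinct points is identically zero. -/
def Disconjugate (κ : ℝ → ℝ) : Prop :=
  ∀ z : ℝ → ℝ, IsJacobi κ z →
    ∀ a b : ℝ, a ≠ b → z a = 0 → z b = 0 → ∀ t, z t = 0

namespace JacobiLimitAux

noncomputable section

/-- The first-order system associated to the Jacobi equation. -/
def sys (κ : ℝ → ℝ) (t : ℝ) (x : ℝ × ℝ) : ℝ × ℝ := (x.2, -κ t * x.1)

lemma sys_dist_le {κ : ℝ → ℝ} {t M : ℝ} (h : |κ t| ≤ M) (x y : ℝ × ℝ) :
    dist (sys κ t x) (sys κ t y) ≤ max 1 M * dist x y := by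
  have h1 : (1:ℝ) ≤ max 1 M := le_max_left _ _
  have hMK : M ≤ max 1 M := le_max_right _ _
  have hk0 : (0:ℝ) ≤ |κ t| := abs_nonneg _
  simp only [sys, Prod.dist_eq, Real.dist_eq]
  have e1 : |(-κ t * x.1) - (-κ t * y.1)| = |κ t| * |x.1 - y.1| := by
    rw [← abs_mul, ← abs_neg]
    congr 1
    ring
  rw [e1]
  have hu : (0:ℝ) ≤ |x.1 - y.1| := abs_nonneg _
  have hv : (0:ℝ) ≤ |x.2 - y.2| := abs_nonneg _
  have hle1 : |x.2 - y.2| ≤ max 1 M * max |x.1 - y.1| |x.2 - y.2| := by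
    have := le_max_right |x.1 - y.1| |x.2 - y.2|
    nlinarith [le_max_right |x.1 - y.1| |x.2 - y.2|]
  have hle2 : |κ t| * |x.1 - y.1| ≤ max 1 M * max |x.1 - y.1| |x.2 - y.2| := by
    have h2 : |κ t| ≤ max 1 M := h.trans hMK
    nlinarith [le_max_left |x.1 - y.1| |x.2 - y.2|]
  exact max_le hle1 hle2

lemma sys_lipschitzWith {κ : ℝ → ℝ} {t M : ℝ} (h : |κ t| ≤ M) :
    LipschitzWith (Real.toNNReal (max 1 M)) (sys κ t) :=
  LipschitzWith.of_dist_le_mul fun x y => by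
    rw [Real.coe_toNNReal _ (le_trans zero_le_one (le_max_left 1 M))]
    exact sys_dist_le h x y

lemma sys_norm_le {κ : ℝ → ℝ} {t M : ℝ} (h : |κ t| ≤ M) (x : ℝ × ℝ) :
    ‖sys κ t x‖ ≤ max 1 M * ‖x‖ := by
  have := sys_dist_le h x 0
  simpa [sys, Prod.dist_eq, Prod.norm_def, Real.dist_eq, Real.norm_eq_abs] using this

lemma exists_local {κ : ℝ → ℝ} (hκ : Continuous κ) {M tMin t₀ tMax : ℝ}
    (hM : ∀ t ∈ Icc tMin tMax, |κ t| ≤ M)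
    (ht₀ : t₀ ∈ Icc tMin tMax)
    (hlen : max (tMax - t₀) (t₀ - tMin) ≤ 1 / (2 * max 1 M)) (x₀ : ℝ × ℝ) :
    ∃ f : ℝ → ℝ × ℝ, f t₀ = x₀ ∧ ∀ t ∈ Icc tMin tMax,
      HasDerivWithinAt f (sys κ t (f t)) (Icc tMin tMax) t := by
  have hK1 : (1:ℝ) ≤ max 1 M := le_max_left _ _
  have hK0 : (0:ℝ) < max 1 M := lt_of_lt_of_le one_pos hK1
  have hx0 : (0:ℝ) ≤ ‖x₀‖ := norm_nonneg _
  have hmd0 : 0 ≤ max (tMax - t₀) (t₀ - tMin) :=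
    le_trans (sub_nonneg.2 ht₀.2) (le_max_left _ _)
  have hpl : IsPicardLindelof (sys κ) (tmin := tMin) (tmax := tMax) ⟨t₀, ht₀⟩ x₀
      (‖x₀‖₊ + 1) 0 (Real.toNNReal (max 1 M * (2 * ‖x₀‖ + 1))) (Real.toNNReal (max 1 M)) := by
    refine ⟨?_, ?_, ?_, ?_⟩
    · exact fun t ht => (sys_lipschitzWith (hM t ht)).lipschitzOnWith
    · intro x _
      exact (continuous_const.prodMk ((hκ.neg).mul continuous_const)).continuousOn
    · intro t ht x hx
      rw [Real.coe_toNNReal _ (mul_nonneg hK0.le (by positivity))]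
      have hxn : ‖x‖ ≤ 2 * ‖x₀‖ + 1 := by
        have h1 := mem_closedBall_iff_norm.mp hx
        simp only [NNReal.coe_add, coe_nnnorm, NNReal.coe_one] at h1
        have h2 : ‖x‖ - ‖x₀‖ ≤ ‖x - x₀‖ := norm_sub_norm_le x x₀
        linarith
      calc ‖sys κ t x‖ ≤ max 1 M * ‖x‖ := sys_norm_le (hM t ht) x
        _ ≤ max 1 M * (2 * ‖x₀‖ + 1) := by nlinarith
    · have hm : max (tMax - t₀) (t₀ - tMin) * (2 * max 1 M) ≤ 1 :=
        (le_div_iff₀ (by positivity)).mp hlen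
      rw [Real.coe_toNNReal _ (mul_nonneg hK0.le (by positivity))]
      simp only [NNReal.coe_add, coe_nnnorm, NNReal.coe_one, NNReal.coe_zero, sub_zero]
      show max 1 M * (2 * ‖x₀‖ + 1) * max (tMax - t₀) (t₀ - tMin) ≤ ‖x₀‖ + 1
      nlinarith [mul_nonneg hx0 (mul_nonneg hK0.le hmd0)]
  exact hpl.exists_eq_forall_mem_Icc_hasDerivWithinAt₀

lemma glue {v : ℝ → ℝ × ℝ → ℝ × ℝ} {f₁ f₂ : ℝ → ℝ × ℝ} {a c d : ℝ}
    (hac : a ≤ c) (hcd : c ≤ d)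
    (h₁ : ∀ t ∈ Icc a c, HasDerivWithinAt f₁ (v t (f₁ t)) (Icc a c) t)
    (h₂ : ∀ t ∈ Icc c d, HasDerivWithinAt f₂ (v t (f₂ t)) (Icc c d) t)
    (heq : f₁ c = f₂ c) :
    ∃ g : ℝ → ℝ × ℝ, (∀ t ∈ Icc a c, g t = f₁ t) ∧ (∀ t ∈ Icc c d, g t = f₂ t) ∧
      ∀ t ∈ Icc a d, HasDerivWithinAt g (v t (g t)) (Icc a d) t := by
  classical
  set g : ℝ → ℝ × ℝ := fun t => if t ≤ c then f₁ t else f₂ t with hg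
  have hgl : ∀ t ∈ Icc a c, g t = f₁ t := fun t ht => if_pos ht.2
  have hgr : ∀ t ∈ Icc c d, g t = f₂ t := by
    intro t ht
    by_cases h : t ≤ c
    · have ht' : t = c := le_antisymm h ht.1
      show (if t ≤ c then f₁ t else f₂ t) = f₂ t
      rw [if_pos h, ht', heq]
    · exact if_neg h
  refine ⟨g, hgl, hgr, ?_⟩
  intro t ht
  rcases lt_trichotomy t c with hc | hc | hc
  · have htm : t ∈ Icc a c := ⟨ht.1, hc.le⟩
    have hmem : Icc a d ∩ Iic c ∈ 𝓝[Icc a d] t :=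
      Filter.inter_mem self_mem_nhdsWithin
        (mem_nhdsWithin_of_mem_nhds (Iic_mem_nhds hc))
    have hsub : Icc a d ∩ Iic c ⊆ Icc a c := fun s hs => ⟨hs.1.1, hs.2⟩
    have hd1 : HasDerivWithinAt f₁ (v t (f₁ t)) (Icc a d ∩ Iic c) t :=
      (h₁ t htm).mono hsub
    have hd2 : HasDerivWithinAt g (v t (f₁ t)) (Icc a d ∩ Iic c) t :=
      hd1.congr (fun s hs => hgl s (hsub hs)) (hgl t htm)
    rw [hgl t htm]
    exact hd2.mono_of_mem_nhdsWithin hmem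
  · subst hc
    have htl : t ∈ Icc a t := ⟨ht.1, le_rfl⟩
    have htr : t ∈ Icc t d := ⟨le_rfl, ht.2⟩
    have hA : HasDerivWithinAt g (v t (g t)) (Icc a t) t := by
      rw [hgl t htl]
      exact (h₁ t htl).congr (fun s hs => hgl s hs) (hgl t htl)
    have hB : HasDerivWithinAt g (v t (g t)) (Icc t d) t := by
      have e : g t = f₂ t := hgr t htr
      rw [e]
      exact (h₂ t htr).congr (fun s hs => hgr s hs) e
    have := hA.union hB
    rwa [Icc_union_Icc_eq_Icc hac hcd] at this
  · have htm : t ∈ Icc c d := ⟨hc.le, ht.2⟩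
    have hmem : Icc a d ∩ Ici c ∈ 𝓝[Icc a d] t :=
      Filter.inter_mem self_mem_nhdsWithin
        (mem_nhdsWithin_of_mem_nhds (Ici_mem_nhds hc))
    have hsub : Icc a d ∩ Ici c ⊆ Icc c d := fun s hs => ⟨hs.2, hs.1.2⟩
    have hd1 : HasDerivWithinAt f₂ (v t (f₂ t)) (Icc a d ∩ Ici c) t :=
      (h₂ t htm).mono hsub
    have hd2 : HasDerivWithinAt g (v t (f₂ t)) (Icc a d ∩ Ici c) t :=
      hd1.congr (fun s hs => hgr s (hsub hs)) (hgr t htm)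
    rw [hgr t htm]
    exact hd2.mono_of_mem_nhdsWithin hmem

lemma exists_on_Icc {κ : ℝ → ℝ} (hκ : Continuous κ) {A B t₀ : ℝ}
    (ht₀ : t₀ ∈ Icc A B) (x₀ : ℝ × ℝ) :
    ∃ f : ℝ → ℝ × ℝ, f t₀ = x₀ ∧ ∀ t ∈ Icc A B,
      HasDerivWithinAt f (sys κ t (f t)) (Icc A B) t := by
  obtain ⟨M, hM⟩ := isCompact_Icc.exists_bound_of_continuousOn
    (hκ.continuousOn (s := Icc A B))
  simp only [Real.norm_eq_abs] at hM
  have hK1 : (1:ℝ) ≤ max 1 M := le_max_left _ _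
  have hK0 : (0:ℝ) < max 1 M := lt_of_lt_of_le one_pos hK1
  set h : ℝ := 1 / (2 * max 1 M) with hhdef
  have hh : 0 < h := by positivity
  have hAB : A ≤ B := ht₀.1.trans ht₀.2
  -- forward existence
  have fwd : ∀ t₁ ∈ Icc A B, ∀ y₀ : ℝ × ℝ, ∃ f, f t₁ = y₀ ∧ ∀ t ∈ Icc t₁ B,
      HasDerivWithinAt f (sys κ t (f t)) (Icc t₁ B) t := by
    intro t₁ ht₁ y₀
    have main : ∀ n : ℕ, ∃ f, f t₁ = y₀ ∧ ∀ t ∈ Icc t₁ (min (t₁ + n * h) B),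
        HasDerivWithinAt f (sys κ t (f t)) (Icc t₁ (min (t₁ + n * h) B)) t := by
      intro n
      induction n with
      | zero =>
        simp only [Nat.cast_zero, zero_mul, add_zero, min_eq_left ht₁.2]
        refine exists_local hκ (M := M)
          (fun t ht => hM t ⟨le_trans ht₁.1 ht.1, le_trans ht.2 ht₁.2⟩)
          ⟨le_rfl, le_rfl⟩ ?_ y₀
        simp only [sub_self, max_self]
        exact hh.le
      | succ n ih =>
        obtain ⟨f₁, hf₁0, hf₁⟩ := ih
        have hstep : (n : ℝ) * h ≤ ((n : ℕ) + 1 : ℕ) * h := by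
          push_cast; nlinarith
        rcases le_total B (t₁ + n * h) with hB | hB
        · have e1 : min (t₁ + (n:ℝ) * h) B = B := min_eq_right hB
          have e2 : min (t₁ + (((n:ℕ)+1:ℕ)) * h) B = B :=
            min_eq_right (hB.trans (by linarith))
          refine ⟨f₁, hf₁0, ?_⟩
          rw [e2]; rw [e1] at hf₁; exact hf₁
        · have e1 : min (t₁ + (n:ℝ) * h) B = t₁ + n * h := min_eq_left hB
          set c : ℝ := t₁ + n * h with hcdef
          set c' : ℝ := min (t₁ + (((n:ℕ)+1:ℕ)) * h) B with hc'def
          have hcc' : c ≤ c' := le_min (by linarith) hB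
          have hc'B : c' ≤ B := min_le_right _ _
          have hnh : (0:ℝ) ≤ (n:ℝ) * h := by positivity
          have ht₁c : t₁ ≤ c := by simp only [hcdef]; linarith
          have hsub : Icc c c' ⊆ Icc A B := fun s hs =>
            ⟨le_trans (le_trans ht₁.1 ht₁c) hs.1, hs.2.trans hc'B⟩
          have hc'ch : c' - c ≤ h := by
            have h1 : c' ≤ t₁ + ((n:ℕ)+1:ℕ) * h := min_le_left _ _
            have : ((((n:ℕ)+1:ℕ)) : ℝ) * h = (n:ℝ) * h + h := by push_cast; ring
            simp only [hcdef]; linarith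
          obtain ⟨f₂, hf₂0, hf₂⟩ := exists_local hκ (M := M)
            (fun t ht => hM t (hsub ht)) (⟨le_rfl, hcc'⟩ : c ∈ Icc c c')
            (by
              refine max_le (by linarith) ?_
              simp only [sub_self]
              exact hh.le) (f₁ c)
          rw [e1] at hf₁
          obtain ⟨g, hg1, _, hg3⟩ := glue ht₁c hcc' hf₁ hf₂ hf₂0.symm
          exact ⟨g, by rw [hg1 t₁ ⟨le_rfl, ht₁c⟩]; exact hf₁0, hg3⟩
    obtain ⟨n, hn⟩ := exists_nat_ge ((B - t₁) / h)
    have hB : B ≤ t₁ + n * h := by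
      rw [div_le_iff₀ hh] at hn; linarith
    obtain ⟨f, h0, hf⟩ := main n
    rw [min_eq_right hB] at hf
    exact ⟨f, h0, hf⟩
  -- backward existence
  have bwd : ∀ t₁ ∈ Icc A B, ∀ y₀ : ℝ × ℝ, ∃ f, f t₁ = y₀ ∧ ∀ t ∈ Icc A t₁,
      HasDerivWithinAt f (sys κ t (f t)) (Icc A t₁) t := by
    intro t₁ ht₁ y₀
    have main : ∀ n : ℕ, ∃ f, f t₁ = y₀ ∧ ∀ t ∈ Icc (max (t₁ - n * h) A) t₁,
        HasDerivWithinAt f (sys κ t (f t)) (Icc (max (t₁ - n * h) A) t₁) t := by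
      intro n
      induction n with
      | zero =>
        simp only [Nat.cast_zero, zero_mul, sub_zero, max_eq_left ht₁.1]
        refine exists_local hκ (M := M)
          (fun t ht => hM t ⟨le_trans ht₁.1 ht.1, le_trans ht.2 ht₁.2⟩)
          ⟨le_rfl, le_rfl⟩ ?_ y₀
        simp only [sub_self, max_self]
        exact hh.le
      | succ n ih =>
        obtain ⟨f₁, hf₁0, hf₁⟩ := ih
        have hstep : (n : ℝ) * h ≤ ((n : ℕ) + 1 : ℕ) * h := by
          push_cast; nlinarith
        rcases le_total (t₁ - n * h) A with hB | hB
        · have e1 : max (t₁ - (n:ℝ) * h) A = A := max_eq_right hB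
          have e2 : max (t₁ - (((n:ℕ)+1:ℕ)) * h) A = A :=
            max_eq_right (le_trans (by linarith) hB)
          refine ⟨f₁, hf₁0, ?_⟩
          rw [e2]; rw [e1] at hf₁; exact hf₁
        · have e1 : max (t₁ - (n:ℝ) * h) A = t₁ - n * h := max_eq_left hB
          set c : ℝ := t₁ - n * h with hcdef
          set c' : ℝ := max (t₁ - (((n:ℕ)+1:ℕ)) * h) A with hc'def
          have hcc' : c' ≤ c := max_le (by linarith) hB
          have hAc' : A ≤ c' := le_max_right _ _
          have hnh : (0:ℝ) ≤ (n:ℝ) * h := by positivity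
          have hct₁ : c ≤ t₁ := by simp only [hcdef]; linarith
          have hsub : Icc c' c ⊆ Icc A B := fun s hs =>
            ⟨le_trans hAc' hs.1, le_trans (hs.2.trans hct₁) ht₁.2⟩
          have hc'ch : c - c' ≤ h := by
            have h1 : t₁ - ((n:ℕ)+1:ℕ) * h ≤ c' := le_max_left _ _
            have : ((((n:ℕ)+1:ℕ)) : ℝ) * h = (n:ℝ) * h + h := by push_cast; ring
            simp only [hcdef]; linarith
          obtain ⟨f₂, hf₂0, hf₂⟩ := exists_local hκ (M := M)
            (fun t ht => hM t (hsub ht)) (⟨hcc', le_rfl⟩ : c ∈ Icc c' c)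
            (by
              refine max_le ?_ (by linarith)
              simp only [sub_self]
              exact hh.le) (f₁ c)
          rw [e1] at hf₁
          obtain ⟨g, _, hg2, hg3⟩ := glue hcc' hct₁ hf₂ hf₁ hf₂0
          exact ⟨g, by rw [hg2 t₁ ⟨hct₁, le_rfl⟩]; exact hf₁0, hg3⟩
    obtain ⟨n, hn⟩ := exists_nat_ge ((t₁ - A) / h)
    have hB : t₁ - n * h ≤ A := by
      rw [div_le_iff₀ hh] at hn; linarith
    obtain ⟨f, h0, hf⟩ := main n
    rw [max_eq_right hB] at hf
    exact ⟨f, h0, hf⟩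
  obtain ⟨fR, hR0, hfR⟩ := fwd t₀ ht₀ x₀
  obtain ⟨fL, hL0, hfL⟩ := bwd t₀ ht₀ x₀
  obtain ⟨g, hg1, _, hg3⟩ := glue ht₀.1 ht₀.2 hfL hfR (by rw [hL0, hR0])
  exact ⟨g, by rw [hg1 t₀ ⟨ht₀.1, le_rfl⟩]; exact hL0, hg3⟩


lemma unique_global {κ : ℝ → ℝ} (hκ : Continuous κ) {f g : ℝ → ℝ × ℝ} {t₀ : ℝ}
    (hf : ∀ t, HasDerivAt f (sys κ t (f t)) t)
    (hg : ∀ t, HasDerivAt g (sys κ t (g t)) t)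
    (h0 : f t₀ = g t₀) : ∀ t, f t = g t := by
  intro t
  set A := min t₀ t - 1 with hA
  set B := max t₀ t + 1 with hB
  have hminmax : min t₀ t ≤ max t₀ t := min_le_max
  have hAB : A ≤ B := by simp only [hA, hB]; linarith
  have ht₀ : t₀ ∈ Ioo A B := by
    constructor
    · simp only [hA]; linarith [min_le_left t₀ t]
    · simp only [hB]; linarith [le_max_left t₀ t]
  have htI : t ∈ Icc A B := by
    constructor
    · simp only [hA]; linarith [min_le_right t₀ t]
    · simp only [hB]; linarith [le_max_right t₀ t]
  obtain ⟨M, hM⟩ := isCompact_Icc.exists_bound_of_continuousOn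
    (hκ.continuousOn (s := Icc A B))
  simp only [Real.norm_eq_abs] at hM
  set π : ℝ → ℝ := fun s => max A (min s B) with hπ
  have hπmem : ∀ s, π s ∈ Icc A B := fun s =>
    ⟨le_max_left _ _, max_le hAB (min_le_right _ _)⟩
  have hπeq : ∀ s ∈ Icc A B, π s = s := fun s hs => by
    simp only [hπ]; rw [min_eq_left hs.2, max_eq_right hs.1]
  set vP : ℝ → ℝ × ℝ → ℝ × ℝ := fun s x => sys κ (π s) x with hvP
  have hlip : ∀ s : ℝ, LipschitzOnWith (Real.toNNReal (max 1 M)) (vP s)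
      ((fun _ => (univ : Set (ℝ × ℝ))) s) :=
    fun s => (sys_lipschitzWith (hM _ (hπmem s))).lipschitzOnWith
  have hfc : ContinuousOn f (Icc A B) := fun s _ => (hf s).continuousAt.continuousWithinAt
  have hgc : ContinuousOn g (Icc A B) := fun s _ => (hg s).continuousAt.continuousWithinAt
  have hf' : ∀ s ∈ Ioo A B, HasDerivAt f (vP s (f s)) s := by
    intro s hs
    have : vP s (f s) = sys κ s (f s) := by
      simp only [hvP]; rw [hπeq s (Ioo_subset_Icc_self hs)]
    rw [this]; exact hf s
  have hg' : ∀ s ∈ Ioo A B, HasDerivAt g (vP s (g s)) s := by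
    intro s hs
    have : vP s (g s) = sys κ s (g s) := by
      simp only [hvP]; rw [hπeq s (Ioo_subset_Icc_self hs)]
    rw [this]; exact hg s
  exact ODE_solution_unique_of_mem_Icc (fun s _ => hlip s) ht₀ hfc hf' (fun _ _ => trivial)
    hgc hg' (fun _ _ => trivial) h0 htI

lemma exists_global {κ : ℝ → ℝ} (hκ : Continuous κ) (t₀ : ℝ) (x₀ : ℝ × ℝ) :
    ∃ f : ℝ → ℝ × ℝ, f t₀ = x₀ ∧ ∀ t, HasDerivAt f (sys κ t (f t)) t := by
  have hmem : ∀ m : ℕ, t₀ ∈ Icc (t₀ - (m + 1)) (t₀ + (m + 1)) := fun m => by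
    have : (0:ℝ) ≤ m := Nat.cast_nonneg m
    constructor <;> linarith
  choose sol h0 hsol using fun m : ℕ => exists_on_Icc hκ (hmem m) x₀
  have hmemI : ∀ (t : ℝ) (m : ℕ), |t - t₀| ≤ m + 1 →
      t ∈ Icc (t₀ - (m + 1)) (t₀ + (m + 1)) := by
    intro t m h
    rcases abs_le.mp h with ⟨h1, h2⟩
    constructor <;> linarith
  have hDA : ∀ (m : ℕ) (s : ℝ), |s - t₀| < m + 1 →
      HasDerivAt (sol m) (sys κ s (sol m s)) s := by
    intro m s hs
    rcases abs_lt.mp hs with ⟨h1, h2⟩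
    exact (hsol m s ⟨by linarith, by linarith⟩).hasDerivAt
      (Icc_mem_nhds (by linarith) (by linarith))
  have hcont : ∀ m : ℕ, ContinuousOn (sol m) (Icc (t₀ - (m+1)) (t₀ + (m+1))) :=
    fun m s hs => (hsol m s hs).continuousWithinAt
  have hcons : ∀ m m' : ℕ, m ≤ m' →
      ∀ s ∈ Icc (t₀ - (m+1)) (t₀ + (m+1)), sol m s = sol m' s := by
    intro m m' hmm'
    set A := t₀ - ((m:ℝ) + 1) with hA
    set B := t₀ + ((m:ℝ) + 1) with hB
    have hm0 : (0:ℝ) ≤ m := Nat.cast_nonneg m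
    have hmm : (m:ℝ) ≤ m' := Nat.cast_le.mpr hmm'
    have hAB : A ≤ B := by simp only [hA, hB]; linarith
    obtain ⟨M, hM⟩ := isCompact_Icc.exists_bound_of_continuousOn
      (hκ.continuousOn (s := Icc A B))
    simp only [Real.norm_eq_abs] at hM
    set π : ℝ → ℝ := fun s => max A (min s B) with hπ
    have hπmem : ∀ s, π s ∈ Icc A B := fun s =>
      ⟨le_max_left _ _, max_le hAB (min_le_right _ _)⟩
    have hπeq : ∀ s ∈ Icc A B, π s = s := fun s hs => by
      simp only [hπ]; rw [min_eq_left hs.2, max_eq_right hs.1]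
    set vP : ℝ → ℝ × ℝ → ℝ × ℝ := fun s x => sys κ (π s) x with hvP
    have hlip : ∀ s : ℝ, LipschitzOnWith (Real.toNNReal (max 1 M)) (vP s)
        ((fun _ => (univ : Set (ℝ × ℝ))) s) :=
      fun s => (sys_lipschitzWith (hM _ (hπmem s))).lipschitzOnWith
    have habs : ∀ s ∈ Ioo A B, |s - t₀| < (m:ℝ) + 1 := by
      intro s hs
      rw [abs_lt]
      rcases hs with ⟨h1, h2⟩
      simp only [hA] at h1; simp only [hB] at h2
      constructor <;> linarith
    have hf' : ∀ s ∈ Ioo A B, HasDerivAt (sol m) (vP s (sol m s)) s := by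
      intro s hs
      have he : vP s (sol m s) = sys κ s (sol m s) := by
        simp only [hvP]; rw [hπeq s (Ioo_subset_Icc_self hs)]
      rw [he]; exact hDA m s (habs s hs)
    have hg' : ∀ s ∈ Ioo A B, HasDerivAt (sol m') (vP s (sol m' s)) s := by
      intro s hs
      have he : vP s (sol m' s) = sys κ s (sol m' s) := by
        simp only [hvP]; rw [hπeq s (Ioo_subset_Icc_self hs)]
      rw [he]
      exact hDA m' s (lt_of_lt_of_le (habs s hs) (by linarith))
    have ht₀ : t₀ ∈ Ioo A B := by
      constructor
      · simp only [hA]; linarith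
      · simp only [hB]; linarith
    have hsub : Icc A B ⊆ Icc (t₀ - ((m':ℝ)+1)) (t₀ + ((m':ℝ)+1)) := by
      intro s hs
      rcases hs with ⟨h1, h2⟩
      simp only [hA] at h1; simp only [hB] at h2
      constructor <;> linarith
    exact ODE_solution_unique_of_mem_Icc (fun s _ => hlip s) ht₀ (hcont m) hf' (fun _ _ => trivial)
      ((hcont m').mono hsub) hg' (fun _ _ => trivial) (by rw [h0 m, h0 m'])
  refine ⟨fun t => sol ⌈|t - t₀|⌉₊ t, ?_, ?_⟩
  · show sol ⌈|t₀ - t₀|⌉₊ t₀ = x₀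
    have e : |t₀ - t₀| = 0 := by simp
    rw [e]
    simpa using h0 0
  · intro t
    set N := ⌈|t - t₀|⌉₊ + 1 with hN
    have hceil : |t - t₀| ≤ (⌈|t - t₀|⌉₊ : ℝ) := Nat.le_ceil _
    have hkey : ∀ t' : ℝ, |t' - t| < 1 → sol ⌈|t' - t₀|⌉₊ t' = sol N t' := by
      intro t' h'
      have h1 : |t' - t₀| ≤ |t' - t| + |t - t₀| := abs_sub_le t' t t₀
      have ht'N : |t' - t₀| ≤ (N:ℝ) := by
        push_cast [hN]; linarith
      have e1 : sol ⌈|t' - t₀|⌉₊ t' = sol (max ⌈|t' - t₀|⌉₊ N) t' := by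
        refine hcons _ _ (le_max_left _ _) t' (hmemI t' _ ?_)
        have := Nat.le_ceil |t' - t₀|
        linarith
      have e2 : sol N t' = sol (max ⌈|t' - t₀|⌉₊ N) t' := by
        refine hcons _ _ (le_max_right _ _) t' (hmemI t' _ ?_)
        linarith
      rw [e1, e2]
    have hder : HasDerivAt (sol N) (sys κ t (sol N t)) t := by
      refine hDA N t ?_
      push_cast [hN]
      linarith
    have hev : (fun t' => sol ⌈|t' - t₀|⌉₊ t') =ᶠ[𝓝 t] sol N := by
      filter_upwards [Metric.ball_mem_nhds t one_pos] with t' ht'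
      exact hkey t' (by simpa [Real.dist_eq] using ht')
    have hFt : sol ⌈|t - t₀|⌉₊ t = sol N t := hkey t (by simp)
    have hres := hder.congr_of_eventuallyEq hev
    rw [show (fun t' => sol ⌈|t' - t₀|⌉₊ t') t = sol ⌈|t - t₀|⌉₊ t from rfl, hFt]
    exact hres

lemma fst_abs_le_norm (x : ℝ × ℝ) : |x.1| ≤ ‖x‖ := by
  rw [Prod.norm_def, Real.norm_eq_abs, Real.norm_eq_abs]
  exact le_max_left _ _

lemma deriv_pair {κ : ℝ → ℝ} {f : ℝ → ℝ × ℝ} (hf : ∀ t, HasDerivAt f (sys κ t (f t)) t) :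
    (∀ t, HasDerivAt (fun s => (f s).1) ((f t).2) t) ∧
      (∀ t, HasDerivAt (fun s => (f s).2) (-κ t * (f t).1) t) := by
  constructor
  · intro t
    have := (hasFDerivAt_fst (𝕜 := ℝ) (E := ℝ) (F := ℝ) (p := f t)).comp_hasDerivAt t (hf t)
    simpa [sys, Function.comp_def] using this
  · intro t
    have := (hasFDerivAt_snd (𝕜 := ℝ) (E := ℝ) (F := ℝ) (p := f t)).comp_hasDerivAt t (hf t)
    simpa [sys, Function.comp_def] using this

lemma jacobi_of_sys {κ : ℝ → ℝ} (hκ : Continuous κ) {f : ℝ → ℝ × ℝ}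
    (hf : ∀ t, HasDerivAt f (sys κ t (f t)) t) :
    IsJacobi κ (fun s => (f s).1) ∧ ∀ t, deriv (fun s => (f s).1) t = (f t).2 := by
  obtain ⟨h1, h2⟩ := deriv_pair hf
  have hd1 : deriv (fun s => (f s).1) = fun s => (f s).2 := funext fun t => (h1 t).deriv
  have hz1 : Differentiable ℝ (fun s => (f s).1) := fun t => (h1 t).differentiableAt
  have hw1 : Differentiable ℝ (fun s => (f s).2) := fun t => (h2 t).differentiableAt
  have hd2 : deriv (fun s => (f s).2) = fun t => -κ t * (f t).1 := funext fun t => (h2 t).deriv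
  have hcont1 : Continuous (fun s => (f s).1) := hz1.continuous
  refine ⟨⟨?_, ?_⟩, fun t => by rw [hd1]⟩
  · rw [show (2 : WithTop ℕ∞) = 1 + 1 from rfl, contDiff_succ_iff_deriv]
    refine ⟨hz1, by simp, ?_⟩
    rw [hd1, contDiff_one_iff_deriv]
    exact ⟨hw1, by rw [hd2]; exact hκ.neg.mul hcont1⟩
  · intro t
    rw [hd1, hd2]
    ring

lemma same_sign {u v : ℝ} (h : |v - u| < |u|) : 0 < u * v := by
  rcases abs_lt.mp h with ⟨h1, h2⟩
  rcases lt_trichotomy u 0 with hu | hu | hu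
  · rw [abs_of_neg hu] at h1 h2; nlinarith
  · rw [hu, sub_zero, abs_zero] at h
    exact absurd h (not_lt.mpr (abs_nonneg v))
  · rw [abs_of_pos hu] at h1 h2; nlinarith

lemma sign_change {z : ℝ → ℝ} {b d : ℝ} (hb : HasDerivAt z d b) (hzb : z b = 0)
    (hd : d ≠ 0) {δ : ℝ} (hδ : 0 < δ) :
    ∃ η : ℝ, 0 < η ∧ η < δ ∧ z (b - η) * z (b + η) < 0 := by
  have hs := hasDerivAt_iff_tendsto_slope.mp hb
  have hd2 : (0:ℝ) < |d| / 2 := by positivity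
  have hev : slope z b ⁻¹' Metric.ball d (|d|/2) ∈ 𝓝[≠] b :=
    hs (Metric.ball_mem_nhds d hd2)
  obtain ⟨ρ, hρ, hsub⟩ := Metric.mem_nhdsWithin_iff.mp hev
  set η := min (ρ/2) (δ/2) with hη
  have hη0 : 0 < η := by positivity
  have hηδ : η < δ := lt_of_le_of_lt (min_le_right _ _) (by linarith)
  have hηρ : η < ρ := lt_of_le_of_lt (min_le_left _ _) (by linarith)
  have hp : (b - η) ∈ Metric.ball b ρ ∩ {b}ᶜ := by
    constructor
    · rw [Metric.mem_ball, Real.dist_eq]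
      rw [abs_of_nonpos (by linarith)]
      linarith
    · simp only [mem_compl_iff, mem_singleton_iff]
      intro hc
      have : η = 0 := by linarith
      exact absurd this hη0.ne'
  have hq : (b + η) ∈ Metric.ball b ρ ∩ {b}ᶜ := by
    constructor
    · rw [Metric.mem_ball, Real.dist_eq]
      rw [abs_of_nonneg (by linarith)]
      linarith
    · simp only [mem_compl_iff, mem_singleton_iff]
      intro hc
      have : η = 0 := by linarith
      exact absurd this hη0.ne'
  have hsp := hsub hp
  have hsq := hsub hq
  rw [mem_preimage, Metric.mem_ball, Real.dist_eq] at hsp hsq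
  have hslp : slope z b (b - η) = z (b - η) / (-η) := by
    rw [slope_def_field, hzb, sub_zero]
    congr 1
    ring
  have hslq : slope z b (b + η) = z (b + η) / η := by
    rw [slope_def_field, hzb, sub_zero]
    congr 1
    ring
  have hzp : z (b - η) = slope z b (b - η) * (-η) := by
    rw [hslp]; field_simp
  have hzq : z (b + η) = slope z b (b + η) * η := by
    rw [hslq]; field_simp
  have hpq : 0 < slope z b (b - η) * slope z b (b + η) := by
    rcases abs_lt.mp hsp with ⟨hp1, hp2⟩
    rcases abs_lt.mp hsq with ⟨hq1, hq2⟩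
    rcases lt_or_gt_of_ne hd with h | h
    · rw [abs_of_neg h] at hp1 hp2 hq1 hq2
      nlinarith
    · rw [abs_of_pos h] at hp1 hp2 hq1 hq2
      nlinarith
  refine ⟨η, hη0, hηδ, ?_⟩
  rw [hzp, hzq]
  nlinarith [mul_pos hpq (mul_pos hη0 hη0)]

end

end JacobiLimitAux

set_option maxHeartbeats 2000000 in
/-- Disconjugacy passes to locally uniform limits of continuous curvatures. -/
theorem disconjugate_of_locally_uniform_limit
    (κn : ℕ → ℝ → ℝ) (κ : ℝ → ℝ)
    (hκn : ∀ n, Continuous (κn n)) (hκ : Continuous κ)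
    (hconv : ∀ K : Set ℝ, IsCompact K → TendstoUniformlyOn κn κ atTop K)
    (hdis : ∀ n, Disconjugate (κn n)) :
    Disconjugate κ := by
  intro z hz a b hab hza hzb t
  by_contra hzt
  open JacobiLimitAux in
  set a' := min a b with ha'
  set b' := max a b with hb'
  have ha'b' : a' < b' := min_lt_max.mpr hab
  have hza' : z a' = 0 := by
    rcases min_choice a b with h | h <;> rw [ha', h] <;> assumption
  have hzb' : z b' = 0 := by
    rcases max_choice a b with h | h <;> rw [hb', h] <;> assumption
  -- z as a system solution
  have hzdiff : Differentiable ℝ z := hz.1.differentiable (by norm_num)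
  have hz2 := hz.1
  rw [show (2 : WithTop ℕ∞) = 1 + 1 from rfl, contDiff_succ_iff_deriv] at hz2
  have hdz1 : ContDiff ℝ 1 (deriv z) := hz2.2.2
  have hdzdiff : Differentiable ℝ (deriv z) := hdz1.differentiable one_ne_zero
  have hdzcont : Continuous (deriv z) := hdzdiff.continuous
  set g : ℝ → ℝ × ℝ := fun s => (z s, deriv z s) with hgdef
  have hgD : ∀ s, HasDerivAt g (JacobiLimitAux.sys κ s (g s)) s := by
    intro s
    have h1 : HasDerivAt z (deriv z s) s := (hzdiff s).hasDerivAt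
    have h2 : HasDerivAt (deriv z) (deriv (deriv z) s) s := (hdzdiff s).hasDerivAt
    have he : deriv (deriv z) s = -κ s * z s := by have := hz.2 s; linarith
    rw [he] at h2
    exact h1.prodMk h2
  have hgc : Continuous g := hzdiff.continuous.prodMk hdzcont
  -- uniqueness: the derivative of z is nonzero at any zero of z
  have huniq : ∀ pt : ℝ, z pt = 0 → deriv z pt = 0 → False := by
    intro pt h1 h2
    have hzero : ∀ s, HasDerivAt (fun _ : ℝ => ((0 : ℝ), (0:ℝ)))
        (JacobiLimitAux.sys κ s ((0:ℝ), (0:ℝ))) s := by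
      intro s
      have he : JacobiLimitAux.sys κ s ((0:ℝ), (0:ℝ)) = ((0:ℝ), (0:ℝ)) := by
        simp [JacobiLimitAux.sys]
      rw [he]
      exact hasDerivAt_const s _
    have heq0 : g pt = ((0:ℝ), (0:ℝ)) := by rw [hgdef]; simp [h1, h2]
    have := JacobiLimitAux.unique_global hκ hgD hzero heq0 t
    exact hzt (congrArg Prod.fst this)
  have hza'' : deriv z a' ≠ 0 := fun h => huniq a' hza' h
  have hzb'' : deriv z b' ≠ 0 := fun h => huniq b' hzb' h
  -- sign change of z near b'
  obtain ⟨η, hη0, hηlt, hsgn⟩ := JacobiLimitAux.sign_change (hzdiff b').hasDerivAt hzb' hzb''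
    (sub_pos.2 ha'b')
  set p := b' - η with hp
  set q := b' + η with hq
  have hap : a' < p := by simp only [hp]; linarith
  have hpq : p < q := by simp only [hp, hq]; linarith
  have ha'q : a' < q := lt_trans hap hpq
  have ha'p : a' ≤ p := hap.le
  have hpqle : p ≤ q := hpq.le
  -- bounds on [a', q]
  obtain ⟨M, hM⟩ := isCompact_Icc.exists_bound_of_continuousOn
    (hκ.continuousOn (s := Icc a' q))
  simp only [Real.norm_eq_abs] at hM
  set K := max 1 M with hK
  have hK1 : (1:ℝ) ≤ K := le_max_left _ _
  obtain ⟨Cg, hCg⟩ := isCompact_Icc.exists_bound_of_continuousOn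
    (hgc.continuousOn (s := Icc a' q))
  have hCg0 : 0 ≤ Cg := le_trans (norm_nonneg _) (hCg a' ⟨le_rfl, ha'q.le⟩)
  set T := q - a' with hT
  have hT0 : 0 < T := by simp only [hT]; linarith
  set X := Real.exp ((K+1) * T) with hX
  have hX1 : 1 ≤ X := Real.one_le_exp (mul_nonneg (by linarith) hT0.le)
  have hX0 : 0 < X := lt_of_lt_of_le one_pos hX1
  set B₂ := (Cg + 1) * X with hB₂
  have hB₂0 : 0 < B₂ := by rw [hB₂]; exact mul_pos (by linarith) hX0
  have hzp0 : z p ≠ 0 := by intro h; rw [h] at hsgn; simp at hsgn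
  have hzq0 : z q ≠ 0 := by intro h; rw [h] at hsgn; simp at hsgn
  set ε₀ := min |z p| |z q| with hε₀
  have hε₀0 : 0 < ε₀ := lt_min (abs_pos.2 hzp0) (abs_pos.2 hzq0)
  set εb := min 1 (ε₀ / (2 * B₂)) with hεb
  have hεb0 : 0 < εb := lt_min one_pos (by positivity)
  have hεb1 : εb ≤ 1 := min_le_left _ _
  -- pick n with κn n close to κ on [a', q]
  have hc := hconv (Icc a' q) isCompact_Icc
  rw [Metric.tendstoUniformlyOn_iff] at hc
  obtain ⟨n, hn⟩ := (hc εb hεb0).exists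
  -- the perturbed solution
  obtain ⟨fn, hfn0, hfnD⟩ := JacobiLimitAux.exists_global (hκn n) a' ((0:ℝ), deriv z a')
  set w := fun s => fn s - g s with hw
  have hwa : w a' = 0 := by
    simp only [hw, hfn0, hgdef, hza']
    simp [Prod.ext_iff]
  have hwD : ∀ s, HasDerivAt w
      (JacobiLimitAux.sys (κn n) s (fn s) - JacobiLimitAux.sys κ s (g s)) s :=
    fun s => (hfnD s).sub (hgD s)
  have hwcont : ContinuousOn w (Icc a' q) :=
    fun s _ => (hwD s).continuousAt.continuousWithinAt
  have hbound : ∀ s ∈ Ico a' q,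
      ‖JacobiLimitAux.sys (κn n) s (fn s) - JacobiLimitAux.sys κ s (g s)‖
        ≤ (K + 1) * ‖w s‖ + εb * Cg := by
    intro s hs
    have hsI : s ∈ Icc a' q := Ico_subset_Icc_self hs
    have hsplit : JacobiLimitAux.sys (κn n) s (fn s) - JacobiLimitAux.sys κ s (g s)
        = (JacobiLimitAux.sys κ s (fn s) - JacobiLimitAux.sys κ s (g s))
          + (JacobiLimitAux.sys (κn n) s (fn s) - JacobiLimitAux.sys κ s (fn s)) := by abel
    have hA : ‖JacobiLimitAux.sys κ s (fn s) - JacobiLimitAux.sys κ s (g s)‖ ≤ K * ‖w s‖ := by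
      have h1 := JacobiLimitAux.sys_dist_le (hM s hsI) (fn s) (g s)
      rw [dist_eq_norm, dist_eq_norm] at h1
      exact h1
    have hB : ‖JacobiLimitAux.sys (κn n) s (fn s) - JacobiLimitAux.sys κ s (fn s)‖
        ≤ εb * (Cg + ‖w s‖) := by
      have he : JacobiLimitAux.sys (κn n) s (fn s) - JacobiLimitAux.sys κ s (fn s)
          = ((0:ℝ), (κ s - κn n s) * (fn s).1) := by
        simp only [JacobiLimitAux.sys, Prod.mk_sub_mk, Prod.mk.injEq]
        constructor <;> ring
      rw [he, Prod.norm_def]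
      simp only [norm_zero, Real.norm_eq_abs]
      rw [max_eq_right (abs_nonneg _), abs_mul]
      have h1 : |κ s - κn n s| ≤ εb := by
        have := hn s hsI
        rw [Real.dist_eq] at this
        exact this.le
      have h2 : |(fn s).1| ≤ Cg + ‖w s‖ := by
        have h3 : |(fn s).1| ≤ ‖fn s‖ := JacobiLimitAux.fst_abs_le_norm _
        have h4 : ‖fn s‖ ≤ ‖g s‖ + ‖w s‖ := by
          have he2 : fn s = g s + w s := by simp [hw]
          rw [he2]
          exact norm_add_le _ _
        have h5 := hCg s hsI
        linarith
      exact mul_le_mul h1 h2 (abs_nonneg _) hεb0.le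
    calc ‖JacobiLimitAux.sys (κn n) s (fn s) - JacobiLimitAux.sys κ s (g s)‖
        = ‖(JacobiLimitAux.sys κ s (fn s) - JacobiLimitAux.sys κ s (g s))
          + (JacobiLimitAux.sys (κn n) s (fn s) - JacobiLimitAux.sys κ s (fn s))‖ := by
          rw [← hsplit]
      _ ≤ ‖JacobiLimitAux.sys κ s (fn s) - JacobiLimitAux.sys κ s (g s)‖
          + ‖JacobiLimitAux.sys (κn n) s (fn s) - JacobiLimitAux.sys κ s (fn s)‖ :=
          norm_add_le _ _
      _ ≤ (K + 1) * ‖w s‖ + εb * Cg := by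
          nlinarith [norm_nonneg (w s), mul_le_mul_of_nonneg_right hεb1 (norm_nonneg (w s))]
  have hgron := norm_le_gronwallBound_of_norm_deriv_right_le (δ := 0) (K := K + 1)
    (ε := εb * Cg) hwcont (fun s _ => (hwD s).hasDerivWithinAt) (by rw [hwa]; simp) hbound
  have hwb : ∀ s ∈ Icc a' q, ‖w s‖ < ε₀ := by
    intro s hs
    have h1 := hgron s hs
    rw [gronwallBound_of_K_ne_0 (by positivity : (K:ℝ) + 1 ≠ 0)] at h1
    have hsT : s - a' ≤ T := by simp only [hT]; linarith [hs.2]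
    have hsa0 : 0 ≤ s - a' := by linarith [hs.1]
    have hexp : Real.exp ((K + 1) * (s - a')) ≤ X := by
      rw [hX]
      apply Real.exp_le_exp.mpr
      have := mul_le_mul_of_nonneg_left hsT (show (0:ℝ) ≤ K + 1 by linarith)
      linarith
    have he0 : (0:ℝ) ≤ Real.exp ((K + 1) * (s - a')) - 1 := by
      have := Real.one_le_exp (mul_nonneg (show (0:ℝ) ≤ K + 1 by linarith) hsa0)
      linarith
    have hd1 : εb * Cg / (K + 1) ≤ εb * Cg := div_le_self (by positivity) (by linarith)
    have h2 : ‖w s‖ ≤ εb * B₂ := by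
      have hKp : (0:ℝ) < K + 1 := by linarith
      have hfac2 : Real.exp ((K + 1) * (s - a')) - 1 ≤ X := by linarith
      have hstep : εb * Cg / (K + 1) * (Real.exp ((K + 1) * (s - a')) - 1) ≤ εb * Cg * X :=
        mul_le_mul hd1 hfac2 he0 (by positivity)
      simp only [zero_mul, zero_add] at h1
      have h5 : ‖w s‖ ≤ εb * Cg * X := h1.trans hstep
      have h6 : εb * Cg * X ≤ εb * B₂ := by
        rw [hB₂]
        nlinarith [mul_nonneg hεb0.le hX0.le]
      linarith
    have h3 : εb * B₂ ≤ ε₀ / 2 := by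
      have h4 : εb ≤ ε₀ / (2 * B₂) := min_le_right _ _
      calc εb * B₂ ≤ ε₀ / (2 * B₂) * B₂ := mul_le_mul_of_nonneg_right h4 hB₂0.le
        _ = ε₀ / 2 := by field_simp
    linarith
  set zn := fun s => (fn s).1 with hzn
  have hpmem : p ∈ Icc a' q := ⟨ha'p, hpqle⟩
  have hqmem : q ∈ Icc a' q := ⟨ha'q.le, le_rfl⟩
  have hwfst : ∀ s, (w s).1 = zn s - z s := by
    intro s
    simp [hw, hgdef, hzn]
  have hznp : |zn p - z p| < ε₀ := by
    have h1 := hwb p hpmem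
    have h2 : |(w p).1| ≤ ‖w p‖ := JacobiLimitAux.fst_abs_le_norm _
    rw [hwfst p] at h2
    linarith
  have hznq : |zn q - z q| < ε₀ := by
    have h1 := hwb q hqmem
    have h2 : |(w q).1| ≤ ‖w q‖ := JacobiLimitAux.fst_abs_le_norm _
    rw [hwfst q] at h2
    linarith
  have hsp : 0 < z p * zn p :=
    JacobiLimitAux.same_sign (lt_of_lt_of_le hznp (min_le_left _ _))
  have hsq : 0 < z q * zn q :=
    JacobiLimitAux.same_sign (lt_of_lt_of_le hznq (min_le_right _ _))
  have hsnpq : zn p * zn q < 0 := by nlinarith [mul_pos hsp hsq]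
  have hfncont : Continuous fn := Differentiable.continuous (fun s => (hfnD s).differentiableAt)
  have hzncont : Continuous zn := continuous_fst.comp hfncont
  obtain ⟨c, hcmem, hc0⟩ : ∃ c ∈ Icc p q, zn c = 0 := by
    rcases lt_trichotomy (zn p) 0 with h | h | h
    · have hq0 : 0 < zn q := by nlinarith
      obtain ⟨c, hc, he⟩ := intermediate_value_Icc hpqle hzncont.continuousOn
        (⟨h.le, hq0.le⟩ : (0:ℝ) ∈ Icc (zn p) (zn q))
      exact ⟨c, hc, he⟩
    · rw [h] at hsnpq; simp at hsnpq
    · have hq0 : zn q < 0 := by nlinarith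
      obtain ⟨c, hc, he⟩ := intermediate_value_Icc' hpqle hzncont.continuousOn
        (⟨hq0.le, h.le⟩ : (0:ℝ) ∈ Icc (zn q) (zn p))
      exact ⟨c, hc, he⟩
  obtain ⟨hJ, hdzn⟩ := JacobiLimitAux.jacobi_of_sys (hκn n) hfnD
  have hzna' : zn a' = 0 := by simp [hzn, hfn0]
  have hzero := hdis n zn hJ a' c (ne_of_lt (lt_of_lt_of_le hap hcmem.1)) hzna' hc0
  have h1 : deriv zn a' = (fn a').2 := hdzn a'
  have h2 : (fn a').2 = deriv z a' := by rw [hfn0]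
  have h3 : zn = fun _ => (0:ℝ) := funext hzero
  have h4 : deriv zn a' = 0 := by rw [h3]; simp
  exact hza'' (by rw [← h2, ← h1, h4])
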